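/- arXiv:1407.7960 — 5 statements merged into one kernel-verified Lean document; each statement's English description precedes it below -/
import Mathlib

section
/- For 0 ≤ 2k ≤ n, the identity [n]_q!/([n-2k]_q! · [k]_{q^2}! · (1+q)^k) = [n choose 2k]_q · M_q(2k-1) holds, where M_q(2k-1) = [2k-1]_q[2k-3]_q⋯[1]_q is the product of q-analogs of odd numbers below 2k. -/
open Polynomial Finset
noncomputable section
abbrev Fq : Type := RatFunc ℚ
def qv : Fq := RatFunc.X
def qint (n : ℕ) : Fq := ∑ i ∈ Finset.range n, qv ^ i
def qfact (n : ℕ) : Fq := ∏ i ∈ Finset.range n, qint (i + 1)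
def qbinom (n k : ℕ) : Fq := if k ≤ n then qfact n / (qfact k * qfact (n - k)) else 0
def qint2 (n : ℕ) : Fq := ∑ i ∈ Finset.range n, qv ^ (2 * i)
def qfact2 (n : ℕ) : Fq := ∏ i ∈ Finset.range n, qint2 (i + 1)
def qbinom2 (n k : ℕ) : Fq := if k ≤ n then qfact2 n / (qfact2 k * qfact2 (n - k)) else 0
def Modd (k : ℕ) : Fq := ∏ j ∈ Finset.range k, qint (2 * j + 1)

lemma am_ne {p : ℚ[X]} (hp : p.eval 1 ≠ 0) : algebraMap ℚ[X] Fq p ≠ 0 := by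
  intro h
  apply hp
  have := RatFunc.algebraMap_injective ℚ (h.trans (map_zero _).symm)
  simp [this]

lemma qint_eq (n : ℕ) : qint n = algebraMap ℚ[X] Fq (∑ i ∈ Finset.range n, X ^ i) := by
  simp [qint, qv, map_sum, map_pow, RatFunc.algebraMap_X]

lemma qint2_eq (n : ℕ) : qint2 n = algebraMap ℚ[X] Fq (∑ i ∈ Finset.range n, X ^ (2 * i)) := by
  simp [qint2, qv, map_sum, map_pow, RatFunc.algebraMap_X]

lemma qint_ne (n : ℕ) (hn : n ≠ 0) : qint n ≠ 0 := by
  rw [qint_eq]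
  apply am_ne
  simp [eval_finset_sum, hn]

lemma qint2_ne (n : ℕ) (hn : n ≠ 0) : qint2 n ≠ 0 := by
  rw [qint2_eq]
  apply am_ne
  simp [eval_finset_sum, hn]

lemma one_add_qv_ne : (1 : Fq) + qv ≠ 0 := by
  have : (1 : Fq) + qv = algebraMap ℚ[X] Fq (1 + X) := by
    simp [qv, RatFunc.algebraMap_X]
  rw [this]
  apply am_ne
  norm_num

lemma qfact_ne (n : ℕ) : qfact n ≠ 0 := by
  rw [qfact]
  exact Finset.prod_ne_zero_iff.2 fun i _ => qint_ne _ (Nat.succ_ne_zero i)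

lemma qfact2_ne (n : ℕ) : qfact2 n ≠ 0 := by
  rw [qfact2]
  exact Finset.prod_ne_zero_iff.2 fun i _ => qint2_ne _ (Nat.succ_ne_zero i)

lemma qint_even (i : ℕ) : qint (2 * i) = qint2 i * (1 + qv) := by
  induction i with
  | zero => simp [qint, qint2]
  | succ i ih =>
    have h2 : 2 * (i + 1) = (2 * i) + 1 + 1 := by ring
    rw [h2, qint, Finset.sum_range_succ, Finset.sum_range_succ, ← qint,
      qint2, Finset.sum_range_succ, ← qint2, ih]
    ring

lemma qfact_even (k : ℕ) : qfact (2 * k) = Modd k * qfact2 k * (1 + qv) ^ k := by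
  induction k with
  | zero => simp [qfact, qfact2, Modd]
  | succ k ih =>
    have h2 : 2 * (k + 1) = (2 * k) + 1 + 1 := by ring
    rw [h2, qfact, Finset.prod_range_succ, Finset.prod_range_succ, ← qfact, ih,
      show Modd (k+1) = Modd k * qint (2*k+1) from Finset.prod_range_succ _ _,
      show qfact2 (k+1) = qfact2 k * qint2 (k+1) from Finset.prod_range_succ _ _,
      show (2 * k + 1 + 1) = 2 * (k + 1) from by ring, qint_even]
    ring

/-- . -/
theorem stmt_2 (n k : ℕ) (h : 2 * k ≤ n) :
    qfact n / (qfact (n - 2 * k) * qfact2 k * (1 + qv) ^ k) = qbinom n (2 * k) * Modd k := by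
  rw [qbinom, if_pos h]
  rw [div_mul_eq_mul_div, div_eq_div_iff]
  · rw [qfact_even]; ring
  · exact mul_ne_zero (mul_ne_zero (qfact_ne _) (qfact2_ne _)) (pow_ne_zero _ one_add_qv_ne)
  · exact mul_ne_zero (qfact_ne _) (qfact_ne _)
end
end

section
/- Let L : ℚ(q)[x] → ℚ(q) be the linear functional determined by L(H_n) = δ_{n,0}, where H_n are the q-Hermite polynomials defined by the recurrence H_{n+1} = x H_n - q^{n-1}[n]_q H_{n-1} with H_0 = 1, H_1 = x. Then L(H_n · H_m) = q^{C(n,2)} [n]_q! · δ_{n,m}, where C(n,2) = n(n-1)/2. -/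
open Polynomial Finset
noncomputable section
def Hq : ℕ → Polynomial Fq
  | 0 => 1
  | 1 => Polynomial.X
  | (n + 2) => Polynomial.X * Hq (n + 1) - Polynomial.C (qv ^ n * qint (n + 1)) * Hq n

lemma Hq_rec (n : ℕ) : Hq (n + 2) = X * Hq (n + 1) - C (qv ^ n * qint (n + 1)) * Hq n := by
  rw [Hq]

lemma qfact_succ (n : ℕ) : qfact (n + 1) = qfact n * qint (n + 1) :=
  Finset.prod_range_succ _ _

lemma tri (k : ℕ) : (k + 2) * (k + 2 - 1) / 2 = (k + 1) * (k + 1 - 1) / 2 + (k + 1) := by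
  obtain ⟨c, hc⟩ := Nat.even_mul_succ_self k
  have h1 : (k + 1) * (k + 1 - 1) = c + c := by
    rw [Nat.add_sub_cancel, Nat.mul_comm]; exact hc
  have h2 : (k + 2) * (k + 2 - 1) = c + c + 2 * (k + 1) := by
    show (k + 2) * (k + 1) = c + c + 2 * (k + 1)
    calc (k + 2) * (k + 1) = k * (k + 1) + 2 * (k + 1) := by ring
    _ = c + c + 2 * (k + 1) := by rw [hc]
  rw [h1, h2]; omega

set_option synthInstance.maxHeartbeats 1000000 in
lemma L_C_mul (L : Polynomial Fq →ₗ[Fq] Fq) (a : Fq) (p : Polynomial Fq) :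
    L (C a * p) = a * L p := by
  rw [← smul_eq_C_mul, map_smul, smul_eq_mul]

lemma main (L : Polynomial Fq →ₗ[Fq] Fq)
    (hL : ∀ n : ℕ, L (Hq n) = if n = 0 then 1 else 0) :
    ∀ m n : ℕ, L (Hq n * Hq m) = if n = m then qv ^ (m * (m - 1) / 2) * qfact m else 0 := by
  intro m
  induction m using Nat.strong_induction_on with
  | _ m ih =>
    match m with
    | 0 =>
      intro n
      have h0 : Hq 0 = (1 : Polynomial Fq) := rfl
      rw [h0, mul_one, hL n]
      split <;> simp [qfact]
    | 1 =>
      intro n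
      match n with
      | 0 =>
        have h0 : Hq 0 = (1 : Polynomial Fq) := rfl
        rw [h0, one_mul, hL 1]
        norm_num
      | j + 1 =>
        have h : Hq (j + 1) * Hq 1 = Hq (j + 2) + C (qv ^ j * qint (j + 1)) * Hq j := by
          rw [Hq_rec j, show Hq 1 = (X : Polynomial Fq) from rfl]; ring
        rw [h, map_add, L_C_mul, hL, hL]
        match j with
        | 0 => simp [qint, qfact]
        | i + 1 => simp

    | k + 2 =>
      intro n
      match n with
      | 0 =>
        have h0 : Hq 0 = (1 : Polynomial Fq) := rfl
        rw [h0, one_mul, hL (k + 2), if_neg (by omega), if_neg (by omega)]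
      | j + 1 =>
        have hpoly : Hq (j + 1) * Hq (k + 2) =
            Hq (j + 2) * Hq (k + 1) + C (qv ^ j * qint (j + 1)) * (Hq j * Hq (k + 1))
              - C (qv ^ k * qint (k + 1)) * (Hq (j + 1) * Hq k) := by
          rw [Hq_rec k, Hq_rec j]; ring
        rw [hpoly, map_sub, map_add, L_C_mul, L_C_mul,
          ih (k + 1) (by omega) (j + 2), ih (k + 1) (by omega) j,
          ih k (by omega) (j + 1)]
        by_cases h1 : j = k + 1
        · subst h1
          rw [if_neg (show ¬(k + 1 + 2 = k + 1) by omega), if_pos rfl,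
            if_neg (show ¬(k + 1 + 1 = k) by omega), if_pos (show k + 1 + 1 = k + 2 from rfl)]
          rw [qfact_succ (k + 1), tri k, pow_add, show k + 1 + 1 = k + 2 from rfl]
          ring
        · by_cases h2 : j + 1 = k
          · rw [if_pos (show j + 2 = k + 1 by omega), if_neg (show ¬(j = k + 1) from h1),
              if_pos h2, if_neg (show ¬(j + 1 = k + 2) by omega)]
            have hk : k = j + 1 := h2.symm
            subst hk
            rw [show j + 1 + 1 = j + 2 from rfl, qfact_succ (j + 1), tri j, pow_add]
            ring
          · rw [if_neg (show ¬(j + 2 = k + 1) by omega), if_neg (show ¬(j = k + 1) from h1),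
              if_neg (show ¬(j + 1 = k) from h2), if_neg (show ¬(j + 1 = k + 2) by omega)]
            ring

/-- Orthogonality of the q-Hermite polynomials with respect to the q-Gaussian functional. -/
theorem stmt_5 (L : Polynomial Fq →ₗ[Fq] Fq)
    (hL : ∀ n : ℕ, L (Hq n) = if n = 0 then 1 else 0) (n m : ℕ) :
    L (Hq n * Hq m) = if n = m then qv ^ (n * (n - 1) / 2) * qfact n else 0 := by
  rw [main L hL m n]
  by_cases h : n = m
  · subst h; rfl
  · simp [h]
end
end

section
/- Let f_1,…,f_N, g_1,…,g_N be Laurent polynomials in one variable over a field F, and let CT(h) denote the constant term of a Laurent polynomial h. Then CT(det[f_j(x_k)]_{j,k=1}^N · det[g_ℓ(x_k^{-1})]_{ℓ,k=1}^N) = N! · det[CT(f_j(x)·g_ℓ(x^{-1}))]_{j,ℓ=1}^N, where on the left CT means the constant term in all N variables x_1,…,x_N jointly. -/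
open Finset
noncomputable section

variable {F : Type*} [Field F]

/-- Substitute `x_k^{±1}` for the variable of a one-variable Laurent polynomial,
landing in the ring of Laurent polynomials in `N` variables. -/
def embVar {N : ℕ} (k : Fin N) (ε : ℤ) (f : AddMonoidAlgebra F ℤ) :
    AddMonoidAlgebra F (Fin N →₀ ℤ) :=
  AddMonoidAlgebra.ofCoeff (Finsupp.mapDomain (fun n : ℤ => Finsupp.single k (ε * n)) f.coeff)

/-- `x ↦ x⁻¹` on one-variable Laurent polynomials. -/
def inv1 (f : AddMonoidAlgebra F ℤ) : AddMonoidAlgebra F ℤ :=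
  AddMonoidAlgebra.ofCoeff (Finsupp.mapDomain (fun n : ℤ => -n) f.coeff)

/-- Constant term of a multivariate Laurent polynomial. -/
def CTN {N : ℕ} (h : AddMonoidAlgebra F (Fin N →₀ ℤ)) : F := h.coeff 0

/-- Constant term of a one-variable Laurent polynomial. -/
def CT1 (h : AddMonoidAlgebra F ℤ) : F := h.coeff 0

section aux
variable {N : ℕ}

lemma embVar_mul (k : Fin N) (ε : ℤ) (a b : AddMonoidAlgebra F ℤ) :
    embVar k ε (a * b) = embVar k ε a * embVar k ε b :=
  AddMonoidAlgebra.mapDomain_mul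
    (⟨fun n : ℤ => Finsupp.single k (ε * n), fun m n => by
      simp [mul_add, Finsupp.single_add]⟩ : AddHom ℤ (Fin N →₀ ℤ)) a b

lemma embVar_neg_one (k : Fin N) (b : AddMonoidAlgebra F ℤ) :
    embVar k (-1) b = embVar k 1 (inv1 b) := by
  unfold embVar inv1
  rw [AddMonoidAlgebra.coeff_ofCoeff, ← Finsupp.mapDomain_comp]
  congr 2
  funext n
  simp

lemma embVar_support (k : Fin N) (ε : ℤ) (c : AddMonoidAlgebra F ℤ) :
    ∀ ν ∈ (embVar k ε c).coeff.support, ν.support ⊆ {k} := by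
  intro ν hν
  have h := Finsupp.mapDomain_support hν
  simp only [Finset.mem_image] at h
  obtain ⟨n, -, rfl⟩ := h
  exact Finsupp.support_single_subset

lemma prod_embVar_support (c : Fin N → AddMonoidAlgebra F ℤ) (S : Finset (Fin N)) :
    ∀ ν ∈ (∏ k ∈ S, embVar k 1 (c k)).coeff.support, ν.support ⊆ S := by
  classical
  induction S using Finset.induction_on with
  | empty =>
      intro ν hν
      rw [Finset.prod_empty] at hν
      rw [AddMonoidAlgebra.one_def] at hν
      have h2 := Finsupp.support_single_subset hν
      simp only [Finset.mem_singleton] at h2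
      subst h2
      simp
  | @insert k S hk ih =>
      intro ν hν
      rw [Finset.prod_insert hk] at hν
      have h := AddMonoidAlgebra.support_coeff_mul_subset _ _ hν
      rw [Finset.mem_add] at h
      obtain ⟨x, hx, y, hy, rfl⟩ := h
      refine (Finsupp.support_add).trans ?_
      apply Finset.union_subset
      · exact (embVar_support k 1 (c k) x hx).trans (by simp)
      · exact (ih y hy).trans (Finset.subset_insert _ _)

lemma CTN_embVar_mul (k : Fin N) (c : AddMonoidAlgebra F ℤ)
    (h : AddMonoidAlgebra F (Fin N →₀ ℤ)) (hs : ∀ ν ∈ h.coeff.support, ν k = 0) :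
    CTN (embVar k 1 c * h) = CT1 c * CTN h := by
  classical
  have hmd : embVar k 1 c = c.coeff.sum fun n r =>
      AddMonoidAlgebra.single (Finsupp.single k ((1:ℤ) * n)) r := by
    rw [embVar, Finsupp.mapDomain, AddMonoidAlgebra.ofCoeff_finsuppSum]; rfl
  rw [CTN, hmd, Finsupp.sum_mul, AddMonoidAlgebra.coeff_finsuppSum, Finsupp.sum_apply]
  have key : ∀ n ∈ c.coeff.support,
      (AddMonoidAlgebra.single (Finsupp.single k ((1:ℤ) * n)) (c.coeff n) * h).coeff 0
        = (fun (n : ℤ) (r : F) => if n = 0 then r * h.coeff 0 else 0) n (c.coeff n) := by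
    intro n _
    rw [AddMonoidAlgebra.coeff_single_mul_apply]
    by_cases hn : n = 0
    · subst hn; simp
    · simp only [if_neg hn]
      have : h.coeff (-Finsupp.single k ((1:ℤ) * n) + 0) = 0 := by
        apply Finsupp.notMem_support_iff.mp
        intro hmem
        have := hs _ hmem
        simp [hn] at this
      rw [this, mul_zero]
  have step : (Finsupp.sum c.coeff fun n b => (AddMonoidAlgebra.single (Finsupp.single k ((1:ℤ) * n)) b * h).coeff 0)
      = Finsupp.sum c.coeff fun (n : ℤ) (r : F) => if n = 0 then r * h.coeff 0 else 0 :=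
    Finset.sum_congr rfl key
  rw [step, Finsupp.sum_ite_eq' c.coeff 0 (fun _ r => r * h.coeff 0)]
  by_cases h0 : (0 : ℤ) ∈ c.coeff.support
  · rw [if_pos h0]; rfl
  · rw [if_neg h0, CT1, Finsupp.notMem_support_iff.mp h0, zero_mul]

lemma CTN_prod (c : Fin N → AddMonoidAlgebra F ℤ) (S : Finset (Fin N)) :
    CTN (∏ k ∈ S, embVar k 1 (c k)) = ∏ k ∈ S, CT1 (c k) := by
  classical
  induction S using Finset.induction_on with
  | empty =>
      rw [Finset.prod_empty, Finset.prod_empty, CTN, AddMonoidAlgebra.one_def]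
      simp
  | @insert k S hk ih =>
      rw [Finset.prod_insert hk, Finset.prod_insert hk, ← ih, CTN_embVar_mul]
      intro ν hν
      have h := prod_embVar_support c S ν hν
      by_contra hne
      exact hk (h (Finsupp.mem_support_iff.mpr hne))

end aux

/-- Constant-term Andréief identity:
`CT(det[f_j(x_k)]·det[g_ℓ(x_k⁻¹)]) = N!·det[CT(f_j(x) g_ℓ(x⁻¹))]`. -/
theorem stmt_12 (N : ℕ) (f g : Fin N → AddMonoidAlgebra F ℤ) :
    CTN (Matrix.det (Matrix.of fun j k : Fin N => embVar k 1 (f j)) *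
         Matrix.det (Matrix.of fun l k : Fin N => embVar k (-1) (g l)))
      = (N.factorial : F) *
        Matrix.det (Matrix.of fun j l : Fin N => CT1 (f j * inv1 (g l))) := by
  classical
  set M : Matrix (Fin N) (Fin N) F :=
    Matrix.of (fun j l : Fin N => CT1 (f j * inv1 (g l))) with hM
  set Φ : AddMonoidAlgebra F (Fin N →₀ ℤ) →+ F :=
    (Finsupp.applyAddHom (0 : Fin N →₀ ℤ)).comp
      (AddMonoidAlgebra.coeffAddEquiv (R := F) (M := Fin N →₀ ℤ)).toAddMonoidHom with hΦdef
  have hΦ : ∀ x : AddMonoidAlgebra F (Fin N →₀ ℤ), CTN x = Φ x := fun _ => rfl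
  rw [Matrix.det_apply, Matrix.det_apply, Finset.sum_mul_sum, hΦ]
  simp only [map_sum]
  have term : ∀ σ τ : Equiv.Perm (Fin N),
      Φ ((Equiv.Perm.sign σ • ∏ i, (Matrix.of fun j k : Fin N => embVar k 1 (f j)) (σ i) i) *
         (Equiv.Perm.sign τ • ∏ i, (Matrix.of fun l k : Fin N => embVar k (-1) (g l)) (τ i) i))
        = (((Equiv.Perm.sign σ * Equiv.Perm.sign τ : ℤˣ) : ℤ)) • ∏ k, M (σ k) (τ k) := by
    intro σ τ
    simp only [Matrix.of_apply, Units.smul_def]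
    rw [smul_mul_smul_comm, map_zsmul]
    have hprod : (∏ i, embVar i 1 (f (σ i))) * ∏ i, embVar i (-1) (g (τ i))
        = ∏ i, embVar i 1 (f (σ i) * inv1 (g (τ i))) := by
      rw [← Finset.prod_mul_distrib]
      refine Finset.prod_congr rfl fun i _ => ?_
      rw [embVar_neg_one, ← embVar_mul]
    rw [hprod, ← hΦ, CTN_prod (fun i => f (σ i) * inv1 (g (τ i))) Finset.univ]
    rw [Units.val_mul]
    rfl
  have goal2 : (∑ σ : Equiv.Perm (Fin N), ∑ τ : Equiv.Perm (Fin N),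
      Φ ((Equiv.Perm.sign σ • ∏ i, (Matrix.of fun j k : Fin N => embVar k 1 (f j)) (σ i) i) *
         (Equiv.Perm.sign τ • ∏ i, (Matrix.of fun l k : Fin N => embVar k (-1) (g l)) (τ i) i)))
      = ∑ σ : Equiv.Perm (Fin N), ∑ τ : Equiv.Perm (Fin N),
        (((Equiv.Perm.sign σ * Equiv.Perm.sign τ : ℤˣ) : ℤ)) • ∏ k, M (σ k) (τ k) := by
    exact Finset.sum_congr rfl fun σ _ => Finset.sum_congr rfl fun τ _ => term σ τ
  rw [goal2]
  have detT : (∑ ρ : Equiv.Perm (Fin N), ((Equiv.Perm.sign ρ : ℤ)) • ∏ j, M j (ρ j)) = M.det := by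
    rw [← Matrix.det_transpose, Matrix.det_apply]
    refine Finset.sum_congr rfl fun ρ _ => ?_
    rw [Units.smul_def]
    rfl
  have inner : ∀ σ : Equiv.Perm (Fin N),
      (∑ τ : Equiv.Perm (Fin N),
        (((Equiv.Perm.sign σ * Equiv.Perm.sign τ : ℤˣ) : ℤ)) • ∏ k, M (σ k) (τ k)) = M.det := by
    intro σ
    rw [← Equiv.sum_comp (Equiv.mulRight σ)
      (fun τ => (((Equiv.Perm.sign σ * Equiv.Perm.sign τ : ℤˣ) : ℤ)) • ∏ k, M (σ k) (τ k))]
    have h1 : ∀ ρ : Equiv.Perm (Fin N),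
        (((Equiv.Perm.sign σ * Equiv.Perm.sign ((Equiv.mulRight σ) ρ) : ℤˣ) : ℤ))
            • ∏ k, M (σ k) (((Equiv.mulRight σ) ρ) k)
          = ((Equiv.Perm.sign ρ : ℤ)) • ∏ j, M j (ρ j) := by
      intro ρ
      have hmr : (Equiv.mulRight σ) ρ = ρ * σ := rfl
      have hsg : Equiv.Perm.sign σ * Equiv.Perm.sign (ρ * σ) = Equiv.Perm.sign ρ := by
        rw [map_mul, mul_left_comm, Int.units_mul_self, mul_one]
      have hpr : (∏ k, M (σ k) ((ρ * σ) k)) = ∏ j, M j (ρ j) := by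
        simp only [Equiv.Perm.mul_apply]
        exact Equiv.prod_comp σ (fun j => M j (ρ j))
      rw [hmr, hsg, hpr]
    calc (∑ ρ : Equiv.Perm (Fin N),
        (((Equiv.Perm.sign σ * Equiv.Perm.sign ((Equiv.mulRight σ) ρ) : ℤˣ) : ℤ))
            • ∏ k, M (σ k) (((Equiv.mulRight σ) ρ) k))
        = ∑ ρ : Equiv.Perm (Fin N), ((Equiv.Perm.sign ρ : ℤ)) • ∏ j, M j (ρ j) :=
          Finset.sum_congr rfl fun ρ _ => h1 ρ
      _ = M.det := detT
  calc (∑ σ : Equiv.Perm (Fin N), ∑ τ : Equiv.Perm (Fin N),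
        (((Equiv.Perm.sign σ * Equiv.Perm.sign τ : ℤˣ) : ℤ)) • ∏ k, M (σ k) (τ k))
      = ∑ _σ : Equiv.Perm (Fin N), M.det := Finset.sum_congr rfl fun σ _ => inner σ
    _ = (N.factorial : F) * M.det := by
        rw [Finset.sum_const, Finset.card_univ, Fintype.card_perm, Fintype.card_fin, nsmul_eq_mul]
end
end

section
/- Let f_n (n ≥ 0) be monic polynomials over ℚ(q) of degree n and M a linear functional with M(f_n f_m) = 0 for n ≠ m. For partitions κ, λ with at most N parts, define F_κ = det[f_{κ_j+N-j}(x_i)]_{i,j=1}^N / det[x_i^{j-1}]_{i,j=1}^N and M^{(2)}(p) = M^{(0)}(p·V²) where V = Π_{i<j}(x_i - x_j). Then M^{(2)}(F_κ·F_λ) = 0 for κ ≠ λ, and M^{(2)}(F_κ·F_κ) = N! Π_{i=1}^N M(f_{κ_i+N-i}²). -/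
open Polynomial Finset
noncomputable section

/-- Apply the linear functional `M` in each of the `N` variables. -/
def M0 {N : ℕ} (M : Polynomial Fq →ₗ[Fq] Fq) (p : MvPolynomial (Fin N) Fq) : Fq :=
  ∑ d ∈ p.support, p.coeff d * ∏ i, M (Polynomial.X ^ d i)

/-- The Vandermonde determinant `det[x_i^{N-j}]`. -/
def VandDet (N : ℕ) : MvPolynomial (Fin N) Fq :=
  Matrix.det (Matrix.of fun i j : Fin N => (MvPolynomial.X i : MvPolynomial (Fin N) Fq) ^ (N - 1 - (j : ℕ)))

/-- `V = ∏_{i<j} (x_i - x_j)`. -/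
def Vprod (N : ℕ) : MvPolynomial (Fin N) Fq :=
  ∏ i : Fin N, ∏ j ∈ Finset.Ioi i, (MvPolynomial.X i - MvPolynomial.X j)

namespace Stmt13Aux

variable {N : ℕ} (M : Polynomial Fq →ₗ[Fq] Fq)

lemma M0_eq_sum (p : MvPolynomial (Fin N) Fq) {S : Finset (Fin N →₀ ℕ)}
    (hS : p.support ⊆ S) :
    M0 M p = ∑ d ∈ S, p.coeff d * ∏ i, M (Polynomial.X ^ d i) := by
  rw [M0, Finset.sum_subset hS]
  intro d _ hd
  rw [MvPolynomial.notMem_support_iff.mp hd, zero_mul]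

lemma M0_zero : M0 M (0 : MvPolynomial (Fin N) Fq) = 0 := by simp [M0]

lemma M0_add (p q : MvPolynomial (Fin N) Fq) : M0 M (p + q) = M0 M p + M0 M q := by
  classical
  rw [M0_eq_sum M (p + q) (S := p.support ∪ q.support) MvPolynomial.support_add,
    M0_eq_sum M p (S := p.support ∪ q.support) Finset.subset_union_left,
    M0_eq_sum M q (S := p.support ∪ q.support) Finset.subset_union_right,
    ← Finset.sum_add_distrib]
  exact Finset.sum_congr rfl fun d _ => by rw [MvPolynomial.coeff_add, add_mul]

lemma M0_sum {ι : Type*} (s : Finset ι) (g : ι → MvPolynomial (Fin N) Fq) :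
    M0 M (∑ x ∈ s, g x) = ∑ x ∈ s, M0 M (g x) := by
  classical
  induction s using Finset.induction with
  | empty => simp [M0_zero]
  | insert _ _ h ih => simp [Finset.sum_insert h, M0_add, ih]

lemma M0_C_mul (c : Fq) (p : MvPolynomial (Fin N) Fq) :
    M0 M (MvPolynomial.C c * p) = c * M0 M p := by
  have hsub : (MvPolynomial.C c * p).support ⊆ p.support := by
    intro d hd
    rw [MvPolynomial.mem_support_iff] at hd ⊢
    intro h
    rw [MvPolynomial.coeff_C_mul, h, mul_zero] at hd
    exact hd rfl
  rw [M0_eq_sum M _ hsub, M0, Finset.mul_sum]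
  exact Finset.sum_congr rfl fun d _ => by rw [MvPolynomial.coeff_C_mul, mul_assoc]

lemma M0_intCast_mul (z : ℤ) (p : MvPolynomial (Fin N) Fq) :
    M0 M ((z : MvPolynomial (Fin N) Fq) * p) = (z : Fq) * M0 M p := by
  rw [← map_intCast (MvPolynomial.C : Fq →+* MvPolynomial (Fin N) Fq) z, M0_C_mul]

lemma M0_monomial (d : Fin N →₀ ℕ) (c : Fq) :
    M0 M (MvPolynomial.monomial d c) = c * ∏ i, M (Polynomial.X ^ d i) := by
  classical
  rcases eq_or_ne c 0 with rfl | hc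
  · simp [M0]
  · rw [M0]
    rw [MvPolynomial.support_monomial, if_neg hc, Finset.sum_singleton,
      MvPolynomial.coeff_monomial, if_pos rfl]

lemma prod_monomial {ι : Type*} (s : Finset ι) (d : ι → (Fin N →₀ ℕ)) (c : ι → Fq) :
    ∏ i ∈ s, (MvPolynomial.monomial (d i) (c i) : MvPolynomial (Fin N) Fq)
      = MvPolynomial.monomial (∑ i ∈ s, d i) (∏ i ∈ s, c i) := by
  classical
  induction s using Finset.induction with
  | empty => simp [MvPolynomial.monomial_zero']
  | insert _ _ h ih =>
      rw [Finset.prod_insert h, ih, MvPolynomial.monomial_mul, Finset.sum_insert h,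
        Finset.prod_insert h]

lemma M0_prod (g : Fin N → Polynomial Fq) :
    M0 M (∏ i, Polynomial.aeval (MvPolynomial.X i : MvPolynomial (Fin N) Fq) (g i))
      = ∏ i, M (g i) := by
  classical
  have hg : ∀ i, Polynomial.aeval (MvPolynomial.X i : MvPolynomial (Fin N) Fq) (g i)
      = ∑ n ∈ (g i).support,
          (MvPolynomial.monomial (Finsupp.single i n) ((g i).coeff n) : MvPolynomial (Fin N) Fq) := by
    intro i
    conv_lhs => rw [(g i).as_sum_support]
    rw [map_sum]
    refine Finset.sum_congr rfl fun n _ => ?_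
    rw [Polynomial.aeval_monomial, MvPolynomial.X_pow_eq_monomial,
      MvPolynomial.algebraMap_eq, MvPolynomial.C_mul_monomial, mul_one]
  simp_rw [hg]
  rw [Finset.prod_univ_sum, M0_sum]
  have hM : ∀ i, M (g i) = ∑ n ∈ (g i).support, (g i).coeff n * M (Polynomial.X ^ n) := by
    intro i
    conv_lhs => rw [(g i).as_sum_support]
    rw [map_sum]
    refine Finset.sum_congr rfl fun n _ => ?_
    rw [← Polynomial.smul_X_eq_monomial, LinearMap.map_smul, smul_eq_mul]
  simp_rw [hM]
  rw [Finset.prod_univ_sum]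
  refine Finset.sum_congr rfl fun D _ => ?_
  rw [prod_monomial, M0_monomial, Finset.prod_mul_distrib]
  congr 1
  refine Finset.prod_congr rfl fun j _ => ?_
  congr 2
  rw [Finsupp.finset_sum_apply]
  simp [Finsupp.single_apply]

lemma M0_det_mul_det (f : ℕ → Polynomial Fq) (a b : Fin N → ℕ) :
    M0 M (Matrix.det (Matrix.of fun i j : Fin N =>
        Polynomial.aeval (MvPolynomial.X i : MvPolynomial (Fin N) Fq) (f (a j))) *
      Matrix.det (Matrix.of fun i j : Fin N =>
        Polynomial.aeval (MvPolynomial.X i : MvPolynomial (Fin N) Fq) (f (b j))))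
    = ∑ σ : Equiv.Perm (Fin N), ∑ τ : Equiv.Perm (Fin N),
        ((Equiv.Perm.sign σ : ℤ) : Fq) * ((Equiv.Perm.sign τ : ℤ) : Fq)
          * ∏ i, M (f (a (σ i)) * f (b (τ i))) := by
  classical
  rw [Matrix.det_apply', Matrix.det_apply', Finset.sum_mul_sum, M0_sum]
  simp_rw [M0_sum]
  have key : ∀ (σ τ : Equiv.Perm (Fin N)),
      M0 M ((((Equiv.Perm.sign σ : ℤ) : MvPolynomial (Fin N) Fq) *
          ∏ i, (Matrix.of fun i j : Fin N =>
            Polynomial.aeval (MvPolynomial.X i : MvPolynomial (Fin N) Fq) (f (a j))) (σ i) i) *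
        (((Equiv.Perm.sign τ : ℤ) : MvPolynomial (Fin N) Fq) *
          ∏ i, (Matrix.of fun i j : Fin N =>
            Polynomial.aeval (MvPolynomial.X i : MvPolynomial (Fin N) Fq) (f (b j))) (τ i) i))
      = ((Equiv.Perm.sign σ : ℤ) : Fq) * ((Equiv.Perm.sign τ : ℤ) : Fq)
          * ∏ i, M (f (a (σ.symm i)) * f (b (τ.symm i))) := by
    intro σ τ
    have h1 : ∀ (c : Fin N → ℕ) (σ : Equiv.Perm (Fin N)),
        (∏ i, Polynomial.aeval (MvPolynomial.X (σ i) : MvPolynomial (Fin N) Fq) (f (c i)))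
          = ∏ i, Polynomial.aeval (MvPolynomial.X i : MvPolynomial (Fin N) Fq) (f (c (σ.symm i))) := by
      intro c σ
      rw [← Equiv.prod_comp σ
        (fun i => Polynomial.aeval (MvPolynomial.X i : MvPolynomial (Fin N) Fq) (f (c (σ.symm i))))]
      simp
    simp only [Matrix.of_apply]
    rw [h1 a σ, h1 b τ]
    rw [show ∀ (x y u v : MvPolynomial (Fin N) Fq), (x * u) * (y * v) = (x * y) * (u * v) from
      fun x y u v => by ring]
    rw [← Int.cast_mul, ← Finset.prod_mul_distrib]
    simp_rw [← map_mul]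
    rw [M0_intCast_mul, M0_prod, Int.cast_mul]
  simp_rw [key]
  rw [← Equiv.sum_comp (Equiv.inv (Equiv.Perm (Fin N)))
    (fun σ => ∑ τ : Equiv.Perm (Fin N),
      ((Equiv.Perm.sign σ : ℤ) : Fq) * ((Equiv.Perm.sign τ : ℤ) : Fq)
        * ∏ i, M (f (a (σ i)) * f (b (τ i))))]
  refine Finset.sum_congr rfl fun σ _ => ?_
  rw [← Equiv.sum_comp (Equiv.inv (Equiv.Perm (Fin N)))
    (fun τ => ((Equiv.Perm.sign (Equiv.inv (Equiv.Perm (Fin N)) σ) : ℤ) : Fq)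
      * ((Equiv.Perm.sign τ : ℤ) : Fq)
      * ∏ i, M (f (a ((Equiv.inv (Equiv.Perm (Fin N)) σ) i)) * f (b (τ i))))]
  refine Finset.sum_congr rfl fun τ _ => ?_
  simp [Equiv.Perm.sign_inv]

end Stmt13Aux

/-- Orthogonality of the multivariate polynomials `F_κ = det[f_{κ_j+N-j}(x_i)]/det[x_i^{j-1}]`
with respect to `M⁽²⁾(p) = M⁰(p·V²)`. -/
theorem stmt_13 (N : ℕ) (f : ℕ → Polynomial Fq)
    (hmonic : ∀ n, (f n).Monic) (hdeg : ∀ n, (f n).natDegree = n)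
    (M : Polynomial Fq →ₗ[Fq] Fq) (horth : ∀ m n, m ≠ n → M (f m * f n) = 0)
    (κ lam : Fin N → ℕ) (hκ : Antitone κ) (hlam : Antitone lam)
    (Fκ Flam : MvPolynomial (Fin N) Fq)
    (hFκ : Fκ * VandDet N = Matrix.det (Matrix.of fun i j : Fin N =>
        Polynomial.aeval (MvPolynomial.X i : MvPolynomial (Fin N) Fq) (f (κ j + (N - 1 - (j : ℕ))))))
    (hFlam : Flam * VandDet N = Matrix.det (Matrix.of fun i j : Fin N =>
        Polynomial.aeval (MvPolynomial.X i : MvPolynomial (Fin N) Fq) (f (lam j + (N - 1 - (j : ℕ)))))) :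
    (κ ≠ lam → M0 M (Fκ * Flam * Vprod N ^ 2) = 0) ∧
    M0 M (Fκ * Fκ * Vprod N ^ 2)
      = (N.factorial : Fq) * ∏ i : Fin N, M (f (κ i + (N - 1 - (i : ℕ))) * f (κ i + (N - 1 - (i : ℕ)))) := by
  classical
  -- abbreviations
  set a : Fin N → ℕ := fun j => κ j + (N - 1 - (j : ℕ)) with ha_def
  set b : Fin N → ℕ := fun j => lam j + (N - 1 - (j : ℕ)) with hb_def
  -- strict antitonicity
  have hstrict : ∀ (c : Fin N → ℕ), Antitone c → StrictAnti (fun j : Fin N => c j + (N - 1 - (j : ℕ))) := by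
    intro c hc i j hij
    have h1 : c j ≤ c i := hc hij.le
    have h2 : (i : ℕ) < j := hij
    have h3 : (j : ℕ) < N := j.isLt
    simp only
    omega
  have haA : StrictAnti a := hstrict κ hκ
  have hbA : StrictAnti b := hstrict lam hlam
  -- Vprod² = VandDet²
  have hVV : (Vprod N) ^ 2 = (VandDet N) ^ 2 := by
    have h1 : VandDet N = ((Matrix.vandermonde fun i : Fin N =>
        (MvPolynomial.X i : MvPolynomial (Fin N) Fq)).submatrix id Fin.revPerm).det := by
      rw [VandDet]
      congr 1
      ext i j
      simp only [Matrix.submatrix_apply, id_eq, Matrix.vandermonde_apply, Matrix.of_apply,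
        Fin.revPerm_apply, Fin.val_rev]
      rw [show N - ((j : ℕ) + 1) = N - 1 - (j : ℕ) from by omega]
    have h2 : VandDet N ^ 2 = (Matrix.vandermonde fun i : Fin N =>
        (MvPolynomial.X i : MvPolynomial (Fin N) Fq)).det ^ 2 := by
      have hsq : (((Equiv.Perm.sign (Fin.revPerm (n := N))) : ℤ) : MvPolynomial (Fin N) Fq) ^ 2
          = 1 := by
        rcases Int.units_eq_one_or (Equiv.Perm.sign (Fin.revPerm (n := N))) with h | h <;>
          rw [h] <;> norm_num
      rw [h1, Matrix.det_permute', mul_pow, hsq, one_mul]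
    rw [h2, Matrix.det_vandermonde, Vprod, ← Finset.prod_pow, ← Finset.prod_pow]
    refine Finset.prod_congr rfl fun i _ => ?_
    rw [← Finset.prod_pow, ← Finset.prod_pow]
    refine Finset.prod_congr rfl fun j _ => ?_
    rw [show (MvPolynomial.X i - MvPolynomial.X j : MvPolynomial (Fin N) Fq)
      = -(MvPolynomial.X j - MvPolynomial.X i) by ring, neg_sq]
  -- the main expansion, for b ∈ {a, b}
  have hmain : ∀ (G : MvPolynomial (Fin N) Fq) (c : Fin N → ℕ),
      G * VandDet N = Matrix.det (Matrix.of fun i j : Fin N =>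
        Polynomial.aeval (MvPolynomial.X i : MvPolynomial (Fin N) Fq) (f (c j))) →
      M0 M (Fκ * G * Vprod N ^ 2)
        = ∑ σ : Equiv.Perm (Fin N), ∑ τ : Equiv.Perm (Fin N),
            ((Equiv.Perm.sign σ : ℤ) : Fq) * ((Equiv.Perm.sign τ : ℤ) : Fq)
              * ∏ i, M (f (a (σ i)) * f (c (τ i))) := by
    intro G c hG
    have : Fκ * G * Vprod N ^ 2 = (Fκ * VandDet N) * (G * VandDet N) := by
      rw [hVV]; ring
    rw [this, hFκ, hG, Stmt13Aux.M0_det_mul_det]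
  -- injectivity facts
  have ha_inj : Function.Injective a := haA.injective
  -- permutation rigidity
  have hperm : ∀ (c : Fin N → ℕ), StrictAnti c →
      ∀ (σ τ : Equiv.Perm (Fin N)), (∀ i, a (σ i) = c (τ i)) → a = c ∧ σ = τ := by
    intro c hcA σ τ h
    set π : Equiv.Perm (Fin N) := σ.symm.trans τ with hπ
    have hac : ∀ j, a j = c (π j) := by
      intro j
      have := h (σ.symm j)
      simpa [hπ] using this
    have hπmono : StrictMono (fun j => π j) := by
      intro i j hij
      have h1 : a j < a i := haA hij
      rw [hac i, hac j] at h1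
      exact (hcA.lt_iff_gt).mp h1
    have hπid : ∀ j, π j = j := by
      have hrange : Set.range (fun j => π j) = Set.range (id : Fin N → Fin N) := by
        rw [Set.range_id]
        exact Set.range_eq_univ.mpr π.surjective
      haveI : WellFoundedLT (Fin N) := inferInstance
      have := (hπmono.range_inj strictMono_id).mp hrange
      exact fun j => congrFun this j
    have hac' : a = c := by
      funext j
      rw [hac j, hπid j]
    refine ⟨hac', ?_⟩
    refine Equiv.ext fun i => ha_inj ?_
    rw [h i, ← hac']
  constructor
  · -- off-diagonal
    intro hne
    rw [hmain Flam b hFlam]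
    refine Finset.sum_eq_zero fun σ _ => Finset.sum_eq_zero fun τ _ => ?_
    have : ∏ i, M (f (a (σ i)) * f (b (τ i))) = 0 := by
      by_cases hall : ∀ i, a (σ i) = b (τ i)
      · exfalso
        obtain ⟨hab, -⟩ := hperm b hbA σ τ hall
        apply hne
        funext j
        have : a j = b j := congrFun hab j
        simp only [ha_def, hb_def] at this
        omega
      · push_neg at hall
        obtain ⟨i, hi⟩ := hall
        exact Finset.prod_eq_zero (Finset.mem_univ i) (horth _ _ hi)
    rw [this, mul_zero]
  · -- diagonal
    rw [hmain Fκ a hFκ]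
    have hdiag : ∀ σ : Equiv.Perm (Fin N),
        (∑ τ : Equiv.Perm (Fin N),
          ((Equiv.Perm.sign σ : ℤ) : Fq) * ((Equiv.Perm.sign τ : ℤ) : Fq)
            * ∏ i, M (f (a (σ i)) * f (a (τ i))))
        = ∏ i, M (f (a i) * f (a i)) := by
      intro σ
      rw [Finset.sum_eq_single_of_mem σ (Finset.mem_univ σ)]
      · have hsq : ((Equiv.Perm.sign σ : ℤ) : Fq) * ((Equiv.Perm.sign σ : ℤ) : Fq) = 1 := by
          rw [← Int.cast_mul, ← Units.val_mul, ← sq, Int.units_sq]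
          simp
        rw [hsq, one_mul]
        rw [← Equiv.prod_comp σ (fun i => M (f (a i) * f (a i)))]
      · intro τ _ hτ
        have : ∏ i, M (f (a (σ i)) * f (a (τ i))) = 0 := by
          by_cases hall : ∀ i, a (σ i) = a (τ i)
          · exact absurd (hperm a haA σ τ hall).2.symm hτ
          · push_neg at hall
            obtain ⟨i, hi⟩ := hall
            exact Finset.prod_eq_zero (Finset.mem_univ i) (horth _ _ hi)
        rw [this, mul_zero]
    simp_rw [hdiag]
    rw [Finset.sum_const, Finset.card_univ, Fintype.card_perm, nsmul_eq_mul,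
      Fintype.card_fin]
end
end

section
/- Let f_n be monic orthogonal polynomials for a linear functional M on ℚ(q)[x] (M(f_i f_j) = 0 for i ≠ j, M(f_i²) ≠ 0). Then for any polynomial p, M^{(2)}(p(x_1)+⋯+p(x_N)) / M^{(2)}(1) = Σ_{j=0}^{N-1} M(p·f_j²)/M(f_j²), where M^{(2)}(h) = M^{(0)}(h·Π_{i<j}(x_i-x_j)²). -/
open Polynomial Finset
noncomputable section
set_option maxHeartbeats 1000000
set_option synthInstance.maxHeartbeats 200000

-- weight
def w {N : ℕ} (M : Polynomial Fq →ₗ[Fq] Fq) (d : Fin N →₀ ℕ) : Fq :=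
  ∏ i, M (Polynomial.X ^ d i)

def LM {N : ℕ} (M : Polynomial Fq →ₗ[Fq] Fq) : MvPolynomial (Fin N) Fq →ₗ[Fq] Fq :=
  Finsupp.lsum Fq (fun d => LinearMap.toSpanSingleton Fq Fq (w M d)) ∘ₗ
    (AddMonoidAlgebra.coeffLinearEquiv Fq).toLinearMap

lemma M0_eq {N : ℕ} (M : Polynomial Fq →ₗ[Fq] Fq) (p : MvPolynomial (Fin N) Fq) :
    M0 M p = LM M p := by
  simp [M0, LM, Finsupp.lsum_apply, Finsupp.sum, LinearMap.toSpanSingleton_apply, w,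
    MvPolynomial.coeff, smul_eq_mul]
  rfl

lemma LM_monomial {N : ℕ} (M : Polynomial Fq →ₗ[Fq] Fq) (d : Fin N →₀ ℕ) (c : Fq) :
    LM M (MvPolynomial.monomial d c) = c * w M d := by
  show (Finsupp.lsum Fq (fun d => LinearMap.toSpanSingleton Fq Fq (w M d))) (Finsupp.single d c) = _
  rw [Finsupp.lsum_single, LinearMap.toSpanSingleton_apply, smul_eq_mul]

lemma prod_monomial {N : ℕ} {ι : Type} (s : Finset ι) (d : ι → (Fin N →₀ ℕ)) (c : ι → Fq) :
    ∏ i ∈ s, MvPolynomial.monomial (d i) (c i)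
      = MvPolynomial.monomial (∑ i ∈ s, d i) (∏ i ∈ s, c i) := by
  induction s using Finset.cons_induction with
  | empty => simp
  | cons a s ha ih =>
      rw [Finset.prod_cons, ih, MvPolynomial.monomial_mul, Finset.sum_cons, Finset.prod_cons]

lemma w_sum_single {N : ℕ} (M : Polynomial Fq →ₗ[Fq] Fq) (d : Fin N → ℕ) :
    w M (∑ i, Finsupp.single i (d i)) = ∏ i, M (Polynomial.X ^ d i) := by
  unfold w
  refine Finset.prod_congr rfl fun i _ => ?_
  congr 1
  rw [Finset.sum_apply']
  simp [Finsupp.single_apply, Finset.sum_ite_eq']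

lemma LM_prod_aeval {N : ℕ} (M : Polynomial Fq →ₗ[Fq] Fq) (g : Fin N → Polynomial Fq) :
    LM M (∏ i, Polynomial.aeval (MvPolynomial.X i : MvPolynomial (Fin N) Fq) (g i))
      = ∏ i, M (g i) := by
  have hg : ∀ i, Polynomial.aeval (MvPolynomial.X i : MvPolynomial (Fin N) Fq) (g i)
      = ∑ k ∈ (g i).support, MvPolynomial.monomial (Finsupp.single i k) ((g i).coeff k) := by
    intro i
    conv_lhs => rw [(g i).as_sum_support]
    rw [map_sum]
    refine Finset.sum_congr rfl fun k _ => ?_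
    rw [Polynomial.aeval_monomial, MvPolynomial.monomial_eq]
    simp [MvPolynomial.X, algebraMap_eq]
  calc LM M (∏ i, Polynomial.aeval (MvPolynomial.X i : MvPolynomial (Fin N) Fq) (g i))
      = LM M (∑ d ∈ Fintype.piFinset (fun i => (g i).support),
          ∏ i, MvPolynomial.monomial (Finsupp.single i (d i)) ((g i).coeff (d i))) := by
        congr 1
        rw [Finset.prod_congr rfl fun i _ => hg i]
        exact Finset.prod_univ_sum (fun i => (g i).support)
          (fun i k => MvPolynomial.monomial (Finsupp.single i k) ((g i).coeff k))
    _ = ∑ d ∈ Fintype.piFinset (fun i => (g i).support),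
          ∏ i, ((g i).coeff (d i) * M (Polynomial.X ^ d i)) := by
        rw [map_sum]
        refine Finset.sum_congr rfl fun d _ => ?_
        rw [prod_monomial, LM_monomial, w_sum_single, ← Finset.prod_mul_distrib]
    _ = ∏ i, ∑ k ∈ (g i).support, ((g i).coeff k * M (Polynomial.X ^ k)) := by
        rw [Finset.prod_univ_sum]
    _ = ∏ i, M (g i) := by
        refine Finset.prod_congr rfl fun i _ => ?_
        conv_rhs => rw [(g i).as_sum_support, map_sum]
        refine Finset.sum_congr rfl fun k _ => ?_
        rw [← Polynomial.C_mul_X_pow_eq_monomial, ← Polynomial.smul_eq_C_mul, map_smul,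
          smul_eq_mul]

def Amat (N : ℕ) (f : ℕ → Polynomial Fq) : Matrix (Fin N) (Fin N) (MvPolynomial (Fin N) Fq) :=
  Matrix.of fun i j => Polynomial.aeval (MvPolynomial.X i) (f (j : ℕ))

def eps {N : ℕ} (σ : Equiv.Perm (Fin N)) : Fq := ((Equiv.Perm.sign σ : ℤ) : Fq)

lemma Vsq_eq (N : ℕ) (f : ℕ → Polynomial Fq) (hmonic : ∀ n, (f n).Monic)
    (hdeg : ∀ n, (f n).natDegree = n) :
    Vprod N ^ 2 = (Amat N f).det ^ 2 := by
  have h1 : (Matrix.vandermonde fun i => (MvPolynomial.X i : MvPolynomial (Fin N) Fq)).det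
      = (Amat N f).det := by
    rw [Matrix.det_eval_matrixOfPolynomials_eq_det_vandermonde
      (fun i => (MvPolynomial.X i : MvPolynomial (Fin N) Fq))
      (fun j => (f (j : ℕ)).map MvPolynomial.C)
      (fun j => by rw [(hmonic j).natDegree_map]; exact hdeg j)
      (fun j => (hmonic j).map _)]
    congr 1
    ext i j
    simp [Amat, Polynomial.eval_map, Polynomial.aeval_def,
      MvPolynomial.algebraMap_eq]
  rw [← h1, Matrix.det_vandermonde, Vprod]
  simp only [← Finset.prod_pow]
  refine Finset.prod_congr rfl fun i _ => Finset.prod_congr rfl fun j _ => by ring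

lemma detA_expand (N : ℕ) (f : ℕ → Polynomial Fq) :
    (Amat N f).det = ∑ σ : Equiv.Perm (Fin N),
      MvPolynomial.C (eps σ) * ∏ i, Polynomial.aeval (MvPolynomial.X i) (f (σ i : ℕ)) := by
  rw [← Matrix.det_transpose, Matrix.det_apply']
  refine Finset.sum_congr rfl fun σ _ => ?_
  have h : (MvPolynomial.C (eps σ) : MvPolynomial (Fin N) Fq)
      = ((Equiv.Perm.sign σ : ℤ) : MvPolynomial (Fin N) Fq) := by
    simp [eps]
  rw [h]
  rfl

lemma key_expand (N : ℕ) (f : ℕ → Polynomial Fq) (hmonic : ∀ n, (f n).Monic)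
    (hdeg : ∀ n, (f n).natDegree = n) (M : Polynomial Fq →ₗ[Fq] Fq)
    (g : Fin N → Polynomial Fq) :
    M0 M ((∏ i, Polynomial.aeval (MvPolynomial.X i : MvPolynomial (Fin N) Fq) (g i))
        * Vprod N ^ 2)
      = ∑ σ : Equiv.Perm (Fin N), ∑ τ : Equiv.Perm (Fin N),
          (eps σ * eps τ) * ∏ i, M (g i * (f (σ i : ℕ) * f (τ i : ℕ))) := by
  have hpoly : (∏ i, Polynomial.aeval (MvPolynomial.X i : MvPolynomial (Fin N) Fq) (g i))
        * Vprod N ^ 2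
      = ∑ σ : Equiv.Perm (Fin N), ∑ τ : Equiv.Perm (Fin N),
          MvPolynomial.C (eps σ * eps τ)
            * ∏ i, Polynomial.aeval (MvPolynomial.X i : MvPolynomial (Fin N) Fq)
                (g i * (f (σ i : ℕ) * f (τ i : ℕ))) := by
    rw [Vsq_eq N f hmonic hdeg, sq, detA_expand, Finset.sum_mul_sum, Finset.mul_sum]
    refine Finset.sum_congr rfl fun σ _ => ?_
    rw [Finset.mul_sum]
    refine Finset.sum_congr rfl fun τ _ => ?_
    have : ∏ i, Polynomial.aeval (MvPolynomial.X i : MvPolynomial (Fin N) Fq)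
        (g i * (f (σ i : ℕ) * f (τ i : ℕ)))
        = ∏ i, (Polynomial.aeval (MvPolynomial.X i : MvPolynomial (Fin N) Fq) (g i)
            * (Polynomial.aeval (MvPolynomial.X i : MvPolynomial (Fin N) Fq) (f (σ i : ℕ))
              * Polynomial.aeval (MvPolynomial.X i : MvPolynomial (Fin N) Fq) (f (τ i : ℕ)))) := by
      exact Finset.prod_congr rfl fun i _ => by rw [map_mul, map_mul]
    rw [this, Finset.prod_mul_distrib, Finset.prod_mul_distrib, map_mul]
    ring
  rw [hpoly, M0_eq, map_sum]
  refine Finset.sum_congr rfl fun σ _ => ?_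
  rw [map_sum]
  refine Finset.sum_congr rfl fun τ _ => ?_
  rw [← MvPolynomial.smul_eq_C_mul, map_smul, smul_eq_mul, LM_prod_aeval]

lemma eps_mul_self {N : ℕ} (σ : Equiv.Perm (Fin N)) : eps σ * eps σ = 1 := by
  simp only [eps, ← Int.cast_mul, ← Units.val_mul, Int.units_mul_self, Units.val_one,
    Int.cast_one]

lemma perm_two_diff {N : ℕ} {σ τ : Equiv.Perm (Fin N)} (h : τ ≠ σ) :
    ∃ i j, i ≠ j ∧ σ i ≠ τ i ∧ σ j ≠ τ j := by
  have hex : ∃ i, σ i ≠ τ i := by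
    by_contra hall
    push_neg at hall
    exact h (Equiv.ext fun i => (hall i).symm)
  obtain ⟨i, hi⟩ := hex
  have hex2 : ∃ j, j ≠ i ∧ σ j ≠ τ j := by
    by_contra hall
    push_neg at hall
    apply hi
    have hm : τ.symm (σ i) = i := by
      by_contra hm
      have : σ (τ.symm (σ i)) = τ (τ.symm (σ i)) := hall _ hm
      rw [Equiv.apply_symm_apply] at this
      exact hm (σ.injective this)
    have := congrArg τ hm
    rw [Equiv.apply_symm_apply] at this
    exact this
  obtain ⟨j, hj, hj2⟩ := hex2
  exact ⟨i, j, fun hh => hj (hh.symm), hi, hj2⟩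

lemma collapse (N : ℕ) (f : ℕ → Polynomial Fq) (M : Polynomial Fq →ₗ[Fq] Fq)
    (horth : ∀ m n, m ≠ n → M (f m * f n) = 0) (g : Fin N → Polynomial Fq)
    (hg : ∀ i j : Fin N, i ≠ j → g i = 1 ∨ g j = 1) :
    ∑ σ : Equiv.Perm (Fin N), ∑ τ : Equiv.Perm (Fin N),
        (eps σ * eps τ) * ∏ i, M (g i * (f (σ i : ℕ) * f (τ i : ℕ)))
      = ∑ σ : Equiv.Perm (Fin N), ∏ i, M (g i * (f (σ i : ℕ) * f (σ i : ℕ))) := by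
  refine Finset.sum_congr rfl fun σ _ => ?_
  rw [Finset.sum_eq_single σ]
  · rw [eps_mul_self, one_mul]
  · intro τ _ hτ
    obtain ⟨i, j, hij, hi, hj⟩ := perm_two_diff hτ
    have key : ∃ m, g m = 1 ∧ σ m ≠ τ m := by
      rcases hg i j hij with h1 | h1
      · exact ⟨i, h1, hi⟩
      · exact ⟨j, h1, hj⟩
    obtain ⟨m, hm1, hm2⟩ := key
    apply mul_eq_zero_of_right
    apply Finset.prod_eq_zero (Finset.mem_univ m)
    rw [hm1, one_mul]
    exact horth _ _ (fun hh => hm2 (Fin.val_injective hh))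
  · intro h
    exact absurd (Finset.mem_univ σ) h

/-- The q-analog of Wigner's level-density formula:
`M⁽²⁾(p(x₁)+⋯+p(x_N))/M⁽²⁾(1) = ∑_{j=0}^{N-1} M(p f_j²)/M(f_j²)`,
with `M⁽²⁾(h) = M⁰(h·V²)`. -/
theorem stmt_16 (N : ℕ) (f : ℕ → Polynomial Fq)
    (hmonic : ∀ n, (f n).Monic) (hdeg : ∀ n, (f n).natDegree = n)
    (M : Polynomial Fq →ₗ[Fq] Fq) (horth : ∀ m n, m ≠ n → M (f m * f n) = 0)
    (hne : ∀ n, M (f n * f n) ≠ 0) (p : Polynomial Fq) :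
    M0 M ((∑ k : Fin N,
        Polynomial.aeval (MvPolynomial.X k : MvPolynomial (Fin N) Fq) p) * Vprod N ^ 2) /
      M0 M (Vprod N ^ 2)
      = ∑ j ∈ Finset.range N, M (p * (f j * f j)) / M (f j * f j) := by
  set P : Fq := ∏ j : Fin N, M (f (j : ℕ) * f (j : ℕ)) with hPdef
  have hP : P ≠ 0 := Finset.prod_ne_zero_iff.mpr fun j _ => hne _
  have hNfac : ((Nat.factorial N : ℕ) : Fq) ≠ 0 := by
    have : CharZero Fq := charZero_of_injective_algebraMap (algebraMap ℚ Fq).injective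
    exact Nat.cast_ne_zero.mpr (Nat.factorial_ne_zero N)
  -- denominator
  have hden : M0 M (Vprod N ^ 2) = ((Nat.factorial N : ℕ) : Fq) * P := by
    have h1 : Vprod N ^ 2 = (∏ i, Polynomial.aeval (MvPolynomial.X i : MvPolynomial (Fin N) Fq)
        ((fun _ : Fin N => (1 : Polynomial Fq)) i)) * Vprod N ^ 2 := by
      simp
    rw [h1, key_expand N f hmonic hdeg M,
      collapse N f M horth _ (fun i j _ => Or.inl rfl)]
    have h2 : ∀ σ : Equiv.Perm (Fin N),
        ∏ i, M ((1 : Polynomial Fq) * (f (σ i : ℕ) * f (σ i : ℕ))) = P := by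
      intro σ
      simp only [one_mul]
      exact Equiv.prod_comp σ (fun j : Fin N => M (f (j : ℕ) * f (j : ℕ)))
    rw [Finset.sum_congr rfl fun σ _ => h2 σ, Finset.sum_const, Finset.card_univ, Fintype.card_perm,
      Fintype.card_fin, nsmul_eq_mul]
  -- numerator
  set g : Fin N → Fin N → Polynomial Fq := fun k i => if i = k then p else 1 with hgdef
  have hnum : M0 M ((∑ k : Fin N,
        Polynomial.aeval (MvPolynomial.X k : MvPolynomial (Fin N) Fq) p) * Vprod N ^ 2)
      = ((Nat.factorial N : ℕ) : Fq) * ∑ j : Fin N,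
          M (p * (f (j : ℕ) * f (j : ℕ))) * (P / M (f (j : ℕ) * f (j : ℕ))) := by
    rw [Finset.sum_mul, M0_eq, map_sum]
    have hterm : ∀ k : Fin N,
        LM M (Polynomial.aeval (MvPolynomial.X k : MvPolynomial (Fin N) Fq) p * Vprod N ^ 2)
        = ∑ σ : Equiv.Perm (Fin N),
            M (p * (f (σ k : ℕ) * f (σ k : ℕ))) * (P / M (f (σ k : ℕ) * f (σ k : ℕ))) := by
      intro k
      have hgk : Polynomial.aeval (MvPolynomial.X k : MvPolynomial (Fin N) Fq) p
          = ∏ i, Polynomial.aeval (MvPolynomial.X i : MvPolynomial (Fin N) Fq) (g k i) := by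
        rw [Finset.prod_eq_single k]
        · rw [hgdef]; simp
        · intro b _ hb
          rw [hgdef]; simp [hb]
        · intro h; exact absurd (Finset.mem_univ k) h
      rw [← M0_eq, hgk, key_expand N f hmonic hdeg M,
        collapse N f M horth _ (fun i j hij => by
          rcases eq_or_ne i k with hik | hik
          · right; rw [hgdef]; simp [show j ≠ k from fun h => hij (hik.trans h.symm)]
          · left; rw [hgdef]; simp [hik])]
      refine Finset.sum_congr rfl fun σ _ => ?_
      rw [← Finset.mul_prod_erase Finset.univ _ (Finset.mem_univ k)]
      congr 1
      · rw [hgdef]; simp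
      · have h2 : ∀ i ∈ Finset.univ.erase k,
            M (g k i * (f (σ i : ℕ) * f (σ i : ℕ))) = M (f (σ i : ℕ) * f (σ i : ℕ)) := by
          intro i hi
          rw [hgdef]
          simp [Finset.ne_of_mem_erase hi]
        rw [Finset.prod_congr rfl h2, eq_div_iff (hne _), mul_comm,
          Finset.mul_prod_erase Finset.univ
            (fun i => M (f (σ i : ℕ) * f (σ i : ℕ))) (Finset.mem_univ k)]
        exact Equiv.prod_comp σ (fun j : Fin N => M (f (j : ℕ) * f (j : ℕ)))
    rw [Finset.sum_congr rfl fun k _ => hterm k, Finset.sum_comm]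
    have h3 : ∀ σ : Equiv.Perm (Fin N),
        ∑ k : Fin N, M (p * (f (σ k : ℕ) * f (σ k : ℕ))) * (P / M (f (σ k : ℕ) * f (σ k : ℕ)))
        = ∑ j : Fin N, M (p * (f (j : ℕ) * f (j : ℕ))) * (P / M (f (j : ℕ) * f (j : ℕ))) :=
      fun σ => Equiv.sum_comp σ
        (fun j : Fin N => M (p * (f (j : ℕ) * f (j : ℕ))) * (P / M (f (j : ℕ) * f (j : ℕ))))
    rw [Finset.sum_congr rfl fun σ _ => h3 σ, Finset.sum_const, Finset.card_univ, Fintype.card_perm,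
      Fintype.card_fin, nsmul_eq_mul]
  rw [hnum, hden, mul_div_mul_left _ _ hNfac, ← Fin.sum_univ_eq_sum_range
    (fun j => M (p * (f j * f j)) / M (f j * f j)) N, Finset.sum_div]
  refine Finset.sum_congr rfl fun j _ => ?_
  rw [div_eq_div_iff hP (hne _), mul_assoc, div_mul_cancel₀ P (hne _)]
end
end
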